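/- Let E be a category with finite coproducts and let k_i : K_i ⟶ L_i, for i ∈ Fin n, be a family of morphisms. For U ⊆ Fin n set σ_U(i) = L_i if i ∈ U and σ_U(i) = K_i otherwise, and define the n-cube 𝒦 : P(Fin n) ⟶ E by 𝒦(U) = ∐_{i ∈ Fin n} σ_U(i), where for U ⊆ V the map 𝒦(U) ⟶ 𝒦(V) is the coproduct of the maps k_i for i ∈ V \ U and identities otherwise. Then 𝒦 is strongly cocartesian: for every U ⊆ Fin n and every pair of distinct elements i, j ∉ U, the square 𝒦(U) ⟶ 𝒦(U ∪ {i}), 𝒦(U) ⟶ 𝒦(U ∪ {j}), 𝒦(U ∪ {i}) ⟶ 𝒦(U ∪ {i, j}), 𝒦(U ∪ {j}) ⟶ 𝒦(U ∪ {i, j}) is a pushout square. -/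

import Mathlib

open CategoryTheory Limits

namespace GoodwillieStmt9

variable {E : Type*} [Category E] [HasFiniteCoproducts E]
variable {n : ℕ} {K L : Fin n → E}

/-- `σ U i` is `L i` if `i ∈ U` and `K i` otherwise. -/
def sigmaObj (K L : Fin n → E) (U : Finset (Fin n)) (i : Fin n) : E :=
  if i ∈ U then L i else K i

/-- The component `σ_U(i) ⟶ σ_V(i)` of the structure maps of the cube `𝒦`:
it is `k i` if `i ∈ V \ U` and an identity otherwise. -/
def cmap (k : ∀ i, K i ⟶ L i) {U V : Finset (Fin n)} (h : U ⊆ V) (i : Fin n) :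
    sigmaObj K L U i ⟶ sigmaObj K L V i :=
  if hU : i ∈ U then eqToHom (by simp [sigmaObj, hU, h hU])
  else if hV : i ∈ V then
    eqToHom (show sigmaObj K L U i = K i by simp [sigmaObj, hU]) ≫ k i ≫
      eqToHom (show L i = sigmaObj K L V i by simp [sigmaObj, hV])
  else eqToHom (by simp [sigmaObj, hU, hV])

/-- The structure map `𝒦(U) ⟶ 𝒦(V)` of the cube `𝒦(U) = ∐ᵢ σ_U(i)`. -/
noncomputable def Kmap (k : ∀ i, K i ⟶ L i) {U V : Finset (Fin n)} (h : U ⊆ V) :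
    (∐ fun i => sigmaObj K L U i) ⟶ (∐ fun i => sigmaObj K L V i) :=
  Limits.Sigma.map (cmap k h)

lemma sigmaObj_congr {U V : Finset (Fin n)} {i : Fin n} (h : i ∈ U ↔ i ∈ V) :
    sigmaObj K L U i = sigmaObj K L V i := by
  unfold sigmaObj; exact if_congr h rfl rfl

lemma cmap_eqToHom (k : ∀ i, K i ⟶ L i) {U V : Finset (Fin n)} (h : U ⊆ V) {i : Fin n}
    (hiv : i ∈ V → i ∈ U) :
    cmap k h i = eqToHom (sigmaObj_congr ⟨fun h' => h h', hiv⟩) := by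
  unfold cmap
  split_ifs with h1 h2
  · rfl
  · exact absurd (hiv h2) h1
  · rfl

lemma cmap_k (k : ∀ i, K i ⟶ L i) {U V : Finset (Fin n)} (h : U ⊆ V) {i : Fin n}
    (hU : i ∉ U) (hV : i ∈ V) :
    cmap k h i = eqToHom (show sigmaObj K L U i = K i by simp [sigmaObj, hU]) ≫ k i ≫
      eqToHom (show L i = sigmaObj K L V i by simp [sigmaObj, hV]) := by
  unfold cmap
  rw [dif_neg hU, dif_pos hV]

lemma cmap_comp (k : ∀ i, K i ⟶ L i) {U V W : Finset (Fin n)} (h1 : U ⊆ V) (h2 : V ⊆ W)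
    (i : Fin n) : cmap k h1 i ≫ cmap k h2 i = cmap k (h1.trans h2) i := by
  by_cases hU : i ∈ U
  · rw [cmap_eqToHom k h1 (fun _ => hU), cmap_eqToHom k (h1.trans h2) (fun _ => hU),
      cmap_eqToHom k h2 (fun _ => h1 hU), eqToHom_trans]
  · by_cases hV : i ∈ V
    · rw [cmap_k k h1 hU hV, cmap_k k (h1.trans h2) hU (h2 hV),
        cmap_eqToHom k h2 (fun _ => hV)]
      simp
    · by_cases hW : i ∈ W
      · rw [cmap_eqToHom k h1 (fun h' => absurd h' hV), cmap_k k h2 hV hW,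
          cmap_k k (h1.trans h2) hU hW]
        simp
      · rw [cmap_eqToHom k h1 (fun h' => absurd h' hV),
          cmap_eqToHom k h2 (fun h' => absurd h' hW),
          cmap_eqToHom k (h1.trans h2) (fun h' => absurd h' hW), eqToHom_trans]

/-- The descended map's component. -/
noncomputable def descFun (k : ∀ i, K i ⟶ L i) (U : Finset (Fin n)) (i j : Fin n) {W : E}
    (f : (∐ fun m => sigmaObj K L (insert i U) m) ⟶ W)
    (g : (∐ fun m => sigmaObj K L (insert j U) m) ⟶ W) (m : Fin n) :
    sigmaObj K L (insert j (insert i U)) m ⟶ W :=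
  if hm : m = j then
    eqToHom (sigmaObj_congr (by subst hm; simp)) ≫
      Sigma.ι (fun m => sigmaObj K L (insert j U) m) m ≫ g
  else
    eqToHom (sigmaObj_congr (by simp [Finset.mem_insert, hm])) ≫
      Sigma.ι (fun m => sigmaObj K L (insert i U) m) m ≫ f

theorem goodwillie_stmt_9 (k : ∀ i, K i ⟶ L i) (U : Finset (Fin n)) (i j : Fin n)
    (hij : i ≠ j) (hi : i ∉ U) (hj : j ∉ U) :
    IsPushout (Kmap k (Finset.subset_insert i U))
      (Kmap k (Finset.subset_insert j U))
      (Kmap k (Finset.subset_insert j (insert i U)))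
      (Kmap k (Finset.insert_subset_insert j (Finset.subset_insert i U))) := by
  have hji : j ≠ i := hij.symm
  have hjUi : j ∉ insert i U := by simp [Finset.mem_insert, hji, hj]
  have hiUj : i ∉ insert j U := by simp [Finset.mem_insert, hij, hi]
  have comm : Kmap k (Finset.subset_insert i U) ≫ Kmap k (Finset.subset_insert j (insert i U)) =
      Kmap k (Finset.subset_insert j U) ≫
        Kmap k (Finset.insert_subset_insert j (Finset.subset_insert i U)) := by
    unfold Kmap
    rw [Sigma.map_comp_map, Sigma.map_comp_map]
    congr 1
    funext m
    rw [cmap_comp, cmap_comp]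
  refine IsPushout.of_isColimit' ⟨comm⟩ ?_
  refine PushoutCocone.IsColimit.mk _
    (fun s => Sigma.desc (descFun k U i j s.inl s.inr)) ?_ ?_ ?_
  · intro s
    have cond : ∀ m : Fin n, cmap k (Finset.subset_insert i U) m ≫
        Sigma.ι (fun m => sigmaObj K L (insert i U) m) m ≫ s.inl =
        cmap k (Finset.subset_insert j U) m ≫
        Sigma.ι (fun m => sigmaObj K L (insert j U) m) m ≫ s.inr := by
      intro m
      have := Sigma.ι (fun m => sigmaObj K L U m) m ≫= s.condition
      simpa [Kmap] using this
    apply Sigma.hom_ext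
    intro m
    simp only [Kmap, Sigma.ι_map_assoc, ι_colimMap_assoc, Discrete.functor_obj, Discrete.natTrans_app,
      colimit.ι_desc, Cofan.mk_pt, Cofan.mk_ι_app, Sigma.ι_desc, Category.assoc]
    by_cases hm : m = j
    · subst hm
      rw [cmap_k k _ hjUi (Finset.mem_insert_self _ _), descFun, dif_pos rfl]
      have := cond m
      rw [cmap_eqToHom k (Finset.subset_insert i U) (fun h' => by
        rcases Finset.mem_insert.mp h' with h | h
        · exact absurd h hji
        · exact absurd h hj), cmap_k k _ hj (Finset.mem_insert_self _ _)] at this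
      simp only [Category.assoc, eqToHom_trans_assoc] at this ⊢
      rw [← IsIso.eq_inv_comp] at this
      simp [this]
    · rw [descFun, dif_neg hm]
      rw [cmap_eqToHom k _ (fun h' => by
        rcases Finset.mem_insert.mp h' with h | h
        · exact absurd h hm
        · exact h)]
      simp
  · intro s
    have cond : ∀ m : Fin n, cmap k (Finset.subset_insert i U) m ≫
        Sigma.ι (fun m => sigmaObj K L (insert i U) m) m ≫ s.inl =
        cmap k (Finset.subset_insert j U) m ≫
        Sigma.ι (fun m => sigmaObj K L (insert j U) m) m ≫ s.inr := by
      intro m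
      have := Sigma.ι (fun m => sigmaObj K L U m) m ≫= s.condition
      simpa [Kmap] using this
    apply Sigma.hom_ext
    intro m
    simp only [Kmap, Sigma.ι_map_assoc, ι_colimMap_assoc, Discrete.functor_obj, Discrete.natTrans_app,
      colimit.ι_desc, Cofan.mk_pt, Cofan.mk_ι_app, Sigma.ι_desc, Category.assoc]
    by_cases hm : m = j
    · subst hm
      rw [descFun, dif_pos rfl,
        cmap_eqToHom k _ (fun _ => Finset.mem_insert_self _ _)]
      simp
    · rw [descFun, dif_neg hm]
      by_cases hmi : m = i
      · rw [cmap_k k _ (by simp [Finset.mem_insert, hm, hmi ▸ hi])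
          (by simp [hmi])]
        have := (cond m).symm
        rw [cmap_eqToHom k (Finset.subset_insert j U) (fun h' => by
          rcases Finset.mem_insert.mp h' with h | h
          · exact absurd h hm
          · exact absurd h (hmi ▸ hi)), cmap_k k (Finset.subset_insert i U) (hmi ▸ hi)
            (by simp [hmi])] at this
        simp only [Category.assoc, eqToHom_trans_assoc] at this ⊢
        rw [← IsIso.eq_inv_comp] at this
        simp [this]
      · -- m ∉ {i, j}: both sides are eqToHom-conjugates, need cond m
        have := cond m
        rw [cmap_eqToHom k (Finset.subset_insert i U) (fun h' => by
          rcases Finset.mem_insert.mp h' with h | h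
          · exact absurd h hmi
          · exact h), cmap_eqToHom k (Finset.subset_insert j U) (fun h' => by
          rcases Finset.mem_insert.mp h' with h | h
          · exact absurd h hm
          · exact h)] at this
        rw [cmap_eqToHom k _ (fun h' => by
          rcases Finset.mem_insert.mp h' with h | h
          · exact h ▸ Finset.mem_insert_self _ _
          · rcases Finset.mem_insert.mp h with h2 | h2
            · exact absurd h2 hmi
            · exact Finset.mem_insert_of_mem h2)]
        rw [← IsIso.eq_inv_comp] at this
        simp only [Category.assoc, eqToHom_trans_assoc, this]
        simp
  · intro s m' h₁ h₂
    apply Sigma.hom_ext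
    intro m
    rw [Sigma.ι_desc, descFun]
    by_cases hm : m = j
    · rw [dif_pos hm]
      have := Sigma.ι (fun m => sigmaObj K L (insert j U) m) m ≫= h₂
      simp only [Kmap, Sigma.ι_map_assoc, ι_colimMap_assoc, Discrete.functor_obj, Discrete.natTrans_app,
        Category.assoc] at this
      rw [cmap_eqToHom k (Finset.insert_subset_insert j (Finset.subset_insert i U))
        (fun _ => Finset.mem_insert.mpr (Or.inl hm))] at this
      rw [← IsIso.eq_inv_comp] at this
      simp only [inv_eqToHom, Category.assoc] at this
      rw [this]
    · rw [dif_neg hm]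
      have := Sigma.ι (fun m => sigmaObj K L (insert i U) m) m ≫= h₁
      simp only [Kmap, Sigma.ι_map_assoc, ι_colimMap_assoc, Discrete.functor_obj, Discrete.natTrans_app,
        Category.assoc] at this
      rw [cmap_eqToHom k (Finset.subset_insert j (insert i U)) (fun h' => by
          rcases Finset.mem_insert.mp h' with h | h
          · exact absurd h hm
          · exact h)] at this
      rw [← IsIso.eq_inv_comp] at this
      simp only [inv_eqToHom, Category.assoc] at this
      rw [this]

end GoodwillieStmt9
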